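/- Let (a_n) be a sequence of complex numbers and (λ_n) an increasing sequence of positive reals tending to infinity. Suppose there exist constants C₁, C₂, C₃ > 0, α>1 and β>α−1 with |a_n| ≤ C₁ n^{−α} and C₂ n^β ≤ λ_n ≤ C₃ n^β for all n ≥ 1. Then the function S(x) = ∑_{n=1}^∞ a_n e^{i λ_n x} is uniformly Hölder continuous on ℝ with exponent (α−1)/β: there exists C>0 with |S(x) − S(y)| ≤ C|x−y|^{(α−1)/β} for all x,y ∈ ℝ. -/

import Mathlib

open Real Complex Filter Finset

lemma tail_term {r a : ℝ} (hr : 0 < r) (ha : 1 ≤ a) :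
    (a+1)^(-r) + r * (a+1)^(-(r+1)) ≤ a^(-r) := by
  have ha0 : 0 < a := lt_of_lt_of_le one_pos ha
  have hb0 : 0 < a + 1 := by linarith
  have hkey : (a+1)^(-r) * (1 + r / (a+1)) ≤ a^(-r) := by
    rcases le_or_gt 1 r with h1r | hr1
    · have hinv : (0:ℝ) < 1/a := by positivity
      have hB : 1 + r * (1/a) ≤ (1 + 1/a) ^ r :=
        one_add_mul_self_le_rpow_one_add (by linarith) h1r
      have h2 : 1 + r / (a+1) ≤ (1 + 1/a) ^ r := by
        refine le_trans ?_ hB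
        have : r / (a+1) ≤ r * (1/a) := by
          rw [div_le_iff₀ hb0, mul_one_div, div_mul_eq_mul_div, le_div_iff₀ ha0]
          nlinarith
        linarith
      have h3 : (1 + 1/a) ^ r = (a+1)^r / a^r := by
        rw [← Real.div_rpow (by positivity) ha0.le]
        congr 1
        field_simp
      calc (a+1)^(-r) * (1 + r/(a+1)) ≤ (a+1)^(-r) * ((a+1)^r / a^r) := by
            apply mul_le_mul_of_nonneg_left _ (by positivity)
            rw [← h3]; exact h2
        _ = a^(-r) := by
            rw [Real.rpow_neg hb0.le, Real.rpow_neg ha0.le]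
            field_simp
    · set u := r / (a+1) with hu
      have hu0 : 0 < u := by positivity
      have hu1 : u < 1 := by
        rw [hu, div_lt_one hb0]; linarith
      have hA : 0 < a ^ r := Real.rpow_pos_of_pos ha0 r
      have hB : 0 < (a+1) ^ r := Real.rpow_pos_of_pos hb0 r
      have h3 : (a/(a+1)) ^ r ≤ 1 - u := by
        have hstep := rpow_one_add_le_one_add_mul_self (s := -(1/(a+1)))
          (by rw [neg_le, neg_neg]; rw [div_le_one hb0]; linarith) hr.le hr1.le
        calc (a/(a+1))^r = (1 + -(1/(a+1)))^r := by
              congr 1; field_simp; ring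
          _ ≤ 1 + r * -(1/(a+1)) := hstep
          _ = 1 - u := by rw [hu]; ring
      have step1 : a ^ r ≤ (a+1)^r * (1 - u) := by
        calc a^r = (a/(a+1))^r * (a+1)^r := by
              rw [← Real.mul_rpow (by positivity) hb0.le, div_mul_cancel₀ _ hb0.ne']
          _ ≤ (1 - u) * (a+1)^r := mul_le_mul_of_nonneg_right h3 hB.le
          _ = (a+1)^r * (1 - u) := mul_comm _ _
      have hAB : a^r * (1+u) ≤ (a+1)^r := by
        have hm := mul_le_mul_of_nonneg_right step1 (by linarith : (0:ℝ) ≤ 1+u)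
        nlinarith [hm, mul_nonneg hB.le (mul_nonneg hu0.le hu0.le)]
      rw [Real.rpow_neg ha0.le, Real.rpow_neg hb0.le, ← one_div, ← one_div,
        mul_comm, ← div_eq_mul_one_div, div_le_div_iff₀ hB hA, one_mul]
      linarith [hAB]
  have heq : (a+1)^(-r) * (1 + r/(a+1)) = (a+1)^(-r) + r * (a+1)^(-(r+1)) := by
    rw [show -(r+1) = -r + (-1) by ring, Real.rpow_add hb0, Real.rpow_neg_one, mul_add, mul_one]
    ring
  linarith [hkey, heq.symm.le, heq.le]


lemma tail_sum {p : ℝ} (hp : 1 < p) (N : ℕ) (hN : 1 ≤ N) :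
    ∑' n : ℕ, ((n : ℝ) + (N:ℝ) + 1) ^ (-p) ≤ (p - 1)⁻¹ * (N : ℝ) ^ (1 - p) := by
  have hr : 0 < p - 1 := by linarith
  set g : ℕ → ℝ := fun i => ((i : ℝ) + N) ^ (1 - p) with hg
  have hN1 : (1:ℝ) ≤ (N:ℝ) := by exact_mod_cast hN
  have hterm : ∀ i : ℕ, ((i:ℝ) + N + 1) ^ (-p) ≤ (p-1)⁻¹ * (g i - g (i+1)) := by
    intro i
    have hic : (0:ℝ) ≤ (i:ℝ) := Nat.cast_nonneg i
    have ha : (1:ℝ) ≤ (i:ℝ) + N := by linarith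
    have t := tail_term hr ha
    rw [show -(p-1) = 1-p from by ring, show -(p-1+1) = -p from by ring] at t
    have hgi1 : g (i+1) = ((i:ℝ) + N + 1)^(1-p) := by
      rw [hg]; push_cast; ring_nf
    have hgi : g i = ((i:ℝ) + N)^(1-p) := rfl
    have h2 : (p-1) * ((i:ℝ)+N+1)^(-p) ≤ g i - g (i+1) := by
      rw [hgi, hgi1]; linarith
    calc ((i:ℝ)+N+1)^(-p) = (p-1)⁻¹ * ((p-1) * ((i:ℝ)+N+1)^(-p)) := by
          field_simp
      _ ≤ (p-1)⁻¹ * (g i - g (i+1)) :=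
          mul_le_mul_of_nonneg_left h2 (inv_nonneg.2 hr.le)
  apply Real.tsum_le_of_sum_range_le
  · intro n; positivity
  · intro M
    calc ∑ i ∈ range M, ((i:ℝ)+N+1)^(-p)
        ≤ ∑ i ∈ range M, (p-1)⁻¹ * (g i - g (i+1)) :=
          sum_le_sum (fun i _ => hterm i)
      _ = (p-1)⁻¹ * (g 0 - g M) := by rw [← mul_sum, sum_range_sub' g M]
      _ ≤ (p-1)⁻¹ * g 0 := by
          have h1 : 0 ≤ g M := Real.rpow_nonneg (by positivity) _
          have h2 : 0 ≤ (p-1)⁻¹ := inv_nonneg.2 hr.le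
          nlinarith
      _ = (p-1)⁻¹ * (N:ℝ)^(1-p) := by rw [hg]; norm_num

lemma head_sum {q : ℝ} (hq : -1 < q) :
    ∃ K > 0, ∀ N : ℕ, 1 ≤ N → ∑ i ∈ Finset.range N, ((i:ℝ)+1)^q ≤ K * (N:ℝ)^(q+1) := by
  rcases le_or_gt 0 q with hq0 | hq0
  · refine ⟨1, one_pos, fun N hN => ?_⟩
    have hNp : (0:ℝ) < N := by exact_mod_cast hN
    calc ∑ i ∈ range N, ((i:ℝ)+1)^q ≤ ∑ i ∈ range N, (N:ℝ)^q := by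
          apply sum_le_sum; intro i hi
          apply Real.rpow_le_rpow (by positivity) _ hq0
          have : i + 1 ≤ N := Finset.mem_range.1 hi
          exact_mod_cast this
      _ = N * (N:ℝ)^q := by rw [sum_const, card_range, nsmul_eq_mul]
      _ = 1 * (N:ℝ)^(q+1) := by
          rw [one_mul, Real.rpow_add_one hNp.ne', mul_comm]
  · have hs0 : 0 < q + 1 := by linarith
    have hs1 : q + 1 ≤ 1 := by linarith
    refine ⟨(q+1)⁻¹, by positivity, fun N hN => ?_⟩
    set f : ℕ → ℝ := fun i => (i:ℝ)^(q+1) with hf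
    have hterm : ∀ i : ℕ, ((i:ℝ)+1)^q ≤ (q+1)⁻¹ * (f (i+1) - f i) := by
      intro i
      have hic : (0:ℝ) ≤ (i:ℝ) := Nat.cast_nonneg i
      have hb0 : (0:ℝ) < (i:ℝ) + 1 := by linarith
      have h3 : ((i:ℝ)/((i:ℝ)+1)) ^ (q+1) ≤ 1 - (q+1)/((i:ℝ)+1) := by
        have hstep := rpow_one_add_le_one_add_mul_self (s := -(1/((i:ℝ)+1)))
          (by rw [neg_le, neg_neg, div_le_one hb0]; linarith) hs0.le hs1
        calc ((i:ℝ)/((i:ℝ)+1))^(q+1) = (1 + -(1/((i:ℝ)+1)))^(q+1) := by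
              congr 1; field_simp; ring
          _ ≤ 1 + (q+1) * -(1/((i:ℝ)+1)) := hstep
          _ = 1 - (q+1)/((i:ℝ)+1) := by ring
      have h4 : (i:ℝ)^(q+1) ≤ ((i:ℝ)+1)^(q+1) - (q+1) * ((i:ℝ)+1)^q := by
        have e1 : (i:ℝ)^(q+1) = ((i:ℝ)/((i:ℝ)+1))^(q+1) * ((i:ℝ)+1)^(q+1) := by
          rw [← Real.mul_rpow (by positivity) hb0.le, div_mul_cancel₀ _ hb0.ne']
        have e2 : ((i:ℝ)+1)^(q+1) / ((i:ℝ)+1) = ((i:ℝ)+1)^q := by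
          rw [← Real.rpow_sub_one hb0.ne']; ring_nf
        calc (i:ℝ)^(q+1) = ((i:ℝ)/((i:ℝ)+1))^(q+1) * ((i:ℝ)+1)^(q+1) := e1
          _ ≤ (1 - (q+1)/((i:ℝ)+1)) * ((i:ℝ)+1)^(q+1) :=
              mul_le_mul_of_nonneg_right h3 (Real.rpow_nonneg hb0.le _)
          _ = ((i:ℝ)+1)^(q+1) - (q+1) * (((i:ℝ)+1)^(q+1) / ((i:ℝ)+1)) := by ring
          _ = ((i:ℝ)+1)^(q+1) - (q+1) * ((i:ℝ)+1)^q := by rw [e2]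
      have hfi1 : f (i+1) = ((i:ℝ)+1)^(q+1) := by rw [hf]; push_cast; ring_nf
      have hfi : f i = (i:ℝ)^(q+1) := rfl
      calc ((i:ℝ)+1)^q = (q+1)⁻¹ * ((q+1) * ((i:ℝ)+1)^q) := by field_simp
        _ ≤ (q+1)⁻¹ * (f (i+1) - f i) := by
            apply mul_le_mul_of_nonneg_left _ (inv_nonneg.2 hs0.le)
            rw [hfi1, hfi]; linarith
    calc ∑ i ∈ range N, ((i:ℝ)+1)^q ≤ ∑ i ∈ range N, (q+1)⁻¹ * (f (i+1) - f i) :=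
          sum_le_sum (fun i _ => hterm i)
      _ = (q+1)⁻¹ * (f N - f 0) := by rw [← mul_sum, sum_range_sub f N]
      _ = (q+1)⁻¹ * (N:ℝ)^(q+1) := by
          rw [hf]; simp [Real.zero_rpow hs0.ne']



lemma exp_diff_bound (t : ℝ) : ‖Complex.exp (Complex.I * t) - 1‖ ≤ min 2 (2 * |t|) := by
  have hnorm : ‖Complex.exp (Complex.I * t)‖ = 1 := by
    rw [Complex.norm_exp]
    simp
  have h2 : ‖Complex.exp (Complex.I * t) - 1‖ ≤ 2 := by
    calc ‖Complex.exp (Complex.I * t) - 1‖ ≤ ‖Complex.exp (Complex.I * t)‖ + ‖(1:ℂ)‖ :=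
          norm_sub_le _ _
      _ = 2 := by rw [hnorm]; norm_num
  have habs : ‖Complex.I * t‖ = |t| := by
    rw [norm_mul, Complex.norm_I, Complex.norm_real, one_mul, Real.norm_eq_abs]
  rcases le_or_gt |t| 1 with h | h
  · refine le_min h2 ?_
    have := Complex.norm_exp_sub_one_le (x := Complex.I * t) (by rw [habs]; exact h)
    rw [habs] at this
    exact this
  · exact le_min h2 (h2.trans (by linarith))

lemma exp_pair_bound (l x y : ℝ) (hl : 0 < l) :
    ‖Complex.exp (Complex.I * l * x) - Complex.exp (Complex.I * l * y)‖ ≤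
      min 2 (2 * (l * |x - y|)) := by
  have hfact : Complex.exp (Complex.I * l * x) - Complex.exp (Complex.I * l * y)
      = Complex.exp (Complex.I * l * y) *
        (Complex.exp (Complex.I * ((l*(x-y) : ℝ) : ℂ)) - 1) := by
    rw [mul_sub, ← Complex.exp_add, mul_one]
    congr 1
    push_cast
    ring
  rw [hfact, norm_mul]
  have h1 : ‖Complex.exp (Complex.I * l * y)‖ = 1 := by
    rw [Complex.norm_exp]; simp
  rw [h1, one_mul]
  have := exp_diff_bound (l*(x-y))
  rwa [abs_mul, abs_of_pos hl] at this



set_option maxHeartbeats 1000000 in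
lemma key_bound (lam : ℕ → ℝ) (C₁ C₃ α β : ℝ) (hC₁ : 0 < C₁) (hC₃ : 0 < C₃)
    (hα : 1 < α) (hβ : α - 1 < β) (hpos : ∀ n, 0 < lam n)
    (hlam₂ : ∀ n : ℕ, lam n ≤ C₃ * ((n : ℝ) + 1) ^ β) :
    ∃ K > 0, ∀ h : ℝ, 0 ≤ h →
      ∑' n : ℕ, (C₁ * ((n:ℝ)+1)^(-α)) * min 2 (2 * (lam n * h)) ≤ K * h ^ ((α-1)/β) := by
  have hβ0 : 0 < β := by linarith
  have hα1 : 0 < α - 1 := by linarith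
  have hγ0 : 0 < (α-1)/β := by positivity
  have hbase : Summable (fun n : ℕ => ((n:ℝ)+1)^(-α)) := by
    have h1 : Summable (fun n : ℕ => ((n:ℝ))^(-α)) := Real.summable_nat_rpow.2 (by linarith)
    have h2 := (summable_nat_add_iff 1).2 h1
    exact h2.congr (fun n => by push_cast; ring_nf)
  obtain ⟨Kq, hKq, hKq'⟩ := head_sum (q := β - α) (by linarith)
  set T := 2 * C₁ * ∑' n : ℕ, ((n:ℝ)+1)^(-α) with hT
  have htsum0 : 0 ≤ ∑' n : ℕ, ((n:ℝ)+1)^(-α) :=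
    tsum_nonneg (fun n => Real.rpow_nonneg (by positivity) _)
  have hT0 : 0 ≤ T := by positivity
  set A := 2 * C₁ * (α-1)⁻¹ with hA
  set B := 2 * C₁ * C₃ * Kq * (2:ℝ)^(β-α+1) with hB
  have hA0 : 0 < A := by positivity
  have hB0 : 0 < B := by
    have : (0:ℝ) < (2:ℝ)^(β-α+1) := Real.rpow_pos_of_pos two_pos _
    positivity
  refine ⟨T + A + B, by linarith, fun h h0 => ?_⟩
  have hmin_nonneg : ∀ n : ℕ, 0 ≤ (C₁ * ((n:ℝ)+1)^(-α)) * min 2 (2 * (lam n * h)) := by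
    intro n
    apply mul_nonneg (by positivity)
    exact le_min (by norm_num) (by have := (hpos n).le; positivity)
  have hmin_le : ∀ n : ℕ,
      (C₁ * ((n:ℝ)+1)^(-α)) * min 2 (2 * (lam n * h)) ≤ 2 * C₁ * ((n:ℝ)+1)^(-α) := by
    intro n
    calc (C₁ * ((n:ℝ)+1)^(-α)) * min 2 (2 * (lam n * h))
        ≤ (C₁ * ((n:ℝ)+1)^(-α)) * 2 :=
          mul_le_mul_of_nonneg_left (min_le_left _ _) (by positivity)
      _ = 2 * C₁ * ((n:ℝ)+1)^(-α) := by ring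
  have hsum_min : Summable (fun n : ℕ => (C₁ * ((n:ℝ)+1)^(-α)) * min 2 (2 * (lam n * h))) :=
    Summable.of_nonneg_of_le hmin_nonneg hmin_le (hbase.mul_left (2*C₁))
  have hrpnn : 0 ≤ h ^ ((α-1)/β) := Real.rpow_nonneg h0 _
  rcases eq_or_lt_of_le h0 with heq | hposh
  · -- h = 0
    rw [← heq]
    have : ∀ n : ℕ, (C₁ * ((n:ℝ)+1)^(-α)) * min 2 (2 * (lam n * 0)) = 0 := by
      intro n; simp
    rw [tsum_congr this, tsum_zero, Real.zero_rpow hγ0.ne', mul_zero]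
  rcases le_or_gt 1 h with h1 | h1
  · -- 1 ≤ h
    have hrp : 1 ≤ h ^ ((α-1)/β) := Real.one_le_rpow h1 hγ0.le
    calc ∑' n : ℕ, (C₁ * ((n:ℝ)+1)^(-α)) * min 2 (2 * (lam n * h))
        ≤ ∑' n : ℕ, 2 * C₁ * ((n:ℝ)+1)^(-α) :=
          Summable.tsum_le_tsum hmin_le hsum_min (hbase.mul_left _)
      _ = T := by rw [hT, tsum_mul_left]
      _ = T * 1 := by ring
      _ ≤ (T + A + B) * h^((α-1)/β) :=
          mul_le_mul (by linarith) hrp one_pos.le (by linarith)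
  · -- 0 < h < 1
    set u := h ^ (-β⁻¹) with hu
    have hu0 : 0 < u := Real.rpow_pos_of_pos hposh _
    have hu1 : 1 ≤ u :=
      Real.one_le_rpow_of_pos_of_le_one_of_nonpos hposh h1.le
        (neg_nonpos.2 (inv_nonneg.2 hβ0.le))
    set N := ⌈u⌉₊ with hN
    have hN1 : 1 ≤ N := Nat.one_le_ceil_iff.2 hu0
    have hNu : u ≤ (N:ℝ) := Nat.le_ceil u
    have hN0 : (0:ℝ) < N := lt_of_lt_of_le hu0 hNu
    have hNle : (N:ℝ) ≤ 2*u := by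
      have := Nat.ceil_lt_add_one hu0.le
      linarith
    rw [← Summable.sum_add_tsum_nat_add N hsum_min]
    have hhead : ∑ i ∈ range N, (C₁ * ((i:ℝ)+1)^(-α)) * min 2 (2 * (lam i * h))
        ≤ B * h^((α-1)/β) := by
      have hstep : ∀ i : ℕ, (C₁*((i:ℝ)+1)^(-α)) * min 2 (2*(lam i * h))
          ≤ (2*C₁*C₃*h) * ((i:ℝ)+1)^(β-α) := by
        intro i
        have h1i : (0:ℝ) < (i:ℝ)+1 := by positivity
        calc (C₁*((i:ℝ)+1)^(-α)) * min 2 (2*(lam i*h))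
            ≤ (C₁*((i:ℝ)+1)^(-α)) * (2*(C₃*((i:ℝ)+1)^β*h)) := by
              apply mul_le_mul_of_nonneg_left _ (by positivity)
              refine (min_le_right _ _).trans ?_
              have h5 : lam i * h ≤ C₃*((i:ℝ)+1)^β*h :=
                mul_le_mul_of_nonneg_right (hlam₂ i) h0
              linarith
          _ = (2*C₁*C₃*h) * (((i:ℝ)+1)^(-α) * ((i:ℝ)+1)^β) := by ring
          _ = (2*C₁*C₃*h) * ((i:ℝ)+1)^(β-α) := by
              rw [← Real.rpow_add h1i]
              ring_nf
      calc ∑ i ∈ range N, (C₁ * ((i:ℝ)+1)^(-α)) * min 2 (2 * (lam i * h))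
          ≤ ∑ i ∈ range N, (2*C₁*C₃*h) * ((i:ℝ)+1)^(β-α) :=
            sum_le_sum (fun i _ => hstep i)
        _ = (2*C₁*C₃*h) * ∑ i ∈ range N, ((i:ℝ)+1)^(β-α) := by rw [mul_sum]
        _ ≤ (2*C₁*C₃*h) * (Kq * (N:ℝ)^(β-α+1)) :=
            mul_le_mul_of_nonneg_left (hKq' N hN1) (by positivity)
        _ ≤ (2*C₁*C₃*h) * (Kq * (2*u)^(β-α+1)) := by
            apply mul_le_mul_of_nonneg_left _ (by positivity)
            apply mul_le_mul_of_nonneg_left _ hKq.le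
            exact Real.rpow_le_rpow hN0.le hNle (by linarith)
        _ = B * (h * u^(β-α+1)) := by
            rw [Real.mul_rpow (by norm_num) hu0.le, hB]; ring
        _ = B * h^((α-1)/β) := by
            congr 1
            rw [hu, ← Real.rpow_mul h0 (-β⁻¹) (β-α+1)]
            rw [show h * h ^ (-β⁻¹*(β-α+1)) = h ^ (1 + -β⁻¹*(β-α+1)) by
              rw [Real.rpow_add hposh, Real.rpow_one]]
            congr 1
            field_simp
            ring
    have htail : ∑' i : ℕ, (C₁ * (((i+N:ℕ):ℝ)+1)^(-α)) * min 2 (2 * (lam (i+N) * h))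
        ≤ A * h^((α-1)/β) := by
      have hterm2 : ∀ i : ℕ, (C₁ * (((i+N:ℕ):ℝ)+1)^(-α)) * min 2 (2*(lam (i+N)*h))
          ≤ (2*C₁) * ((i:ℝ)+(N:ℝ)+1)^(-α) := by
        intro i
        have hcast : ((i+N:ℕ):ℝ) = (i:ℝ)+(N:ℝ) := by push_cast; ring
        rw [hcast]
        calc (C₁ * ((i:ℝ)+(N:ℝ)+1)^(-α)) * min 2 (2*(lam (i+N)*h))
            ≤ (C₁ * ((i:ℝ)+(N:ℝ)+1)^(-α)) * 2 :=
              mul_le_mul_of_nonneg_left (min_le_left _ _) (by positivity)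
          _ = (2*C₁) * ((i:ℝ)+(N:ℝ)+1)^(-α) := by ring
      have hsummable_shift :
          Summable (fun i : ℕ => (C₁ * (((i+N:ℕ):ℝ)+1)^(-α)) * min 2 (2*(lam (i+N)*h))) :=
        (summable_nat_add_iff N).2 hsum_min
      have hsummable_tail : Summable (fun i : ℕ => ((i:ℝ)+(N:ℝ)+1)^(-α)) := by
        have h6 := (summable_nat_add_iff N).2 hbase
        exact h6.congr (fun i => by push_cast; ring_nf)
      calc ∑' i : ℕ, (C₁ * (((i+N:ℕ):ℝ)+1)^(-α)) * min 2 (2 * (lam (i+N) * h))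
          ≤ ∑' i : ℕ, (2*C₁) * ((i:ℝ)+(N:ℝ)+1)^(-α) :=
            Summable.tsum_le_tsum hterm2 hsummable_shift (hsummable_tail.mul_left _)
        _ = (2*C₁) * ∑' i : ℕ, ((i:ℝ)+(N:ℝ)+1)^(-α) := tsum_mul_left
        _ ≤ (2*C₁) * ((α-1)⁻¹ * (N:ℝ)^(1-α)) :=
            mul_le_mul_of_nonneg_left (tail_sum hα N hN1) (by positivity)
        _ ≤ (2*C₁) * ((α-1)⁻¹ * u^(1-α)) := by
            apply mul_le_mul_of_nonneg_left _ (by positivity)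
            apply mul_le_mul_of_nonneg_left _ (by positivity)
            exact Real.rpow_le_rpow_of_nonpos hu0 hNu (by linarith)
        _ = A * h^((α-1)/β) := by
            rw [hA, hu, ← Real.rpow_mul h0 (-β⁻¹) (1-α)]
            rw [show -β⁻¹ * (1-α) = (α-1)/β by field_simp; ring]
            ring
    calc ∑ i ∈ range N, (C₁ * ((i:ℝ)+1)^(-α)) * min 2 (2 * (lam i * h)) +
          ∑' i : ℕ, (C₁ * (((i+N:ℕ):ℝ)+1)^(-α)) * min 2 (2 * (lam (i+N) * h))
        ≤ B * h^((α-1)/β) + A * h^((α-1)/β) := add_le_add hhead htail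
      _ ≤ (T + A + B) * h^((α-1)/β) := by nlinarith [mul_nonneg hT0 hrpnn]

theorem stmt_17 (a : ℕ → ℂ) (lam : ℕ → ℝ) (hmono : StrictMono lam)
    (hpos : ∀ n, 0 < lam n) (hlim : Tendsto lam atTop atTop)
    (C₁ C₂ C₃ α β : ℝ) (hC₁ : 0 < C₁) (hC₂ : 0 < C₂) (hC₃ : 0 < C₃)
    (hα : 1 < α) (hβ : α - 1 < β)
    (ha : ∀ n : ℕ, ‖a n‖ ≤ C₁ * ((n : ℝ) + 1) ^ (-α))
    (hlam₁ : ∀ n : ℕ, C₂ * ((n : ℝ) + 1) ^ β ≤ lam n)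
    (hlam₂ : ∀ n : ℕ, lam n ≤ C₃ * ((n : ℝ) + 1) ^ β) :
    ∃ C > (0 : ℝ), ∀ x y : ℝ,
      ‖(∑' n : ℕ, a n * Complex.exp (Complex.I * (lam n : ℂ) * (x : ℂ))) -
        (∑' n : ℕ, a n * Complex.exp (Complex.I * (lam n : ℂ) * (y : ℂ)))‖ ≤
        C * |x - y| ^ ((α - 1) / β) := by
  obtain ⟨K, hK, hKb⟩ := key_bound lam C₁ C₃ α β hC₁ hC₃ hα hβ hpos hlam₂
  refine ⟨K, hK, fun x y => ?_⟩
  have hbase0 : Summable (fun n : ℕ => ((n:ℝ)+1)^(-α)) := by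
    have h1 : Summable (fun n : ℕ => ((n:ℝ))^(-α)) := Real.summable_nat_rpow.2 (by linarith)
    exact ((summable_nat_add_iff 1).2 h1).congr (fun n => by push_cast; ring_nf)
  have hexp_norm : ∀ (l t : ℝ), ‖Complex.exp (Complex.I * (l:ℂ) * (t:ℂ))‖ = 1 := by
    intro l t
    rw [Complex.norm_exp]
    simp
  have hsummx : ∀ t : ℝ,
      Summable (fun n : ℕ => a n * Complex.exp (Complex.I * (lam n : ℂ) * (t : ℂ))) := by
    intro t
    apply Summable.of_norm_bounded (hbase0.mul_left C₁)
    intro n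
    rw [norm_mul, hexp_norm, mul_one]
    exact ha n
  have hmin_nonneg : ∀ n : ℕ,
      0 ≤ (C₁ * ((n:ℝ)+1)^(-α)) * min 2 (2 * (lam n * |x - y|)) := by
    intro n
    apply mul_nonneg (by positivity)
    exact le_min (by norm_num) (by have := (hpos n).le; positivity)
  have hmin_le : ∀ n : ℕ,
      (C₁ * ((n:ℝ)+1)^(-α)) * min 2 (2 * (lam n * |x - y|)) ≤ 2 * C₁ * ((n:ℝ)+1)^(-α) := by
    intro n
    calc (C₁ * ((n:ℝ)+1)^(-α)) * min 2 (2 * (lam n * |x - y|))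
        ≤ (C₁ * ((n:ℝ)+1)^(-α)) * 2 :=
          mul_le_mul_of_nonneg_left (min_le_left _ _) (by positivity)
      _ = 2 * C₁ * ((n:ℝ)+1)^(-α) := by ring
  have hsum_min : Summable
      (fun n : ℕ => (C₁ * ((n:ℝ)+1)^(-α)) * min 2 (2 * (lam n * |x - y|))) :=
    Summable.of_nonneg_of_le hmin_nonneg hmin_le (hbase0.mul_left (2*C₁))
  have hterm : ∀ n : ℕ,
      ‖a n * Complex.exp (Complex.I * (lam n : ℂ) * (x : ℂ)) -
        a n * Complex.exp (Complex.I * (lam n : ℂ) * (y : ℂ))‖ ≤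
      (C₁ * ((n:ℝ)+1)^(-α)) * min 2 (2 * (lam n * |x - y|)) := by
    intro n
    rw [← mul_sub, norm_mul]
    apply mul_le_mul (ha n) (exp_pair_bound (lam n) x y (hpos n)) (norm_nonneg _)
      (by positivity)
  have hnorm_summable : Summable (fun n : ℕ =>
      ‖a n * Complex.exp (Complex.I * (lam n : ℂ) * (x : ℂ)) -
        a n * Complex.exp (Complex.I * (lam n : ℂ) * (y : ℂ))‖) :=
    Summable.of_nonneg_of_le (fun n => norm_nonneg _) hterm hsum_min
  rw [← Summable.tsum_sub (hsummx x) (hsummx y)]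
  calc ‖∑' n : ℕ, (a n * Complex.exp (Complex.I * (lam n : ℂ) * (x : ℂ)) -
          a n * Complex.exp (Complex.I * (lam n : ℂ) * (y : ℂ)))‖
      ≤ ∑' n : ℕ, ‖a n * Complex.exp (Complex.I * (lam n : ℂ) * (x : ℂ)) -
          a n * Complex.exp (Complex.I * (lam n : ℂ) * (y : ℂ))‖ :=
        norm_tsum_le_tsum_norm hnorm_summable
    _ ≤ ∑' n : ℕ, (C₁ * ((n:ℝ)+1)^(-α)) * min 2 (2 * (lam n * |x - y|)) :=
        Summable.tsum_le_tsum hterm hnorm_summable hsum_min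
    _ ≤ K * |x - y| ^ ((α - 1) / β) := hKb _ (abs_nonneg _)
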